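/- Let {A(k)}_{k∈ℕ} be a sequence of n×n row-stochastic real matrices, let B ≥ 1 be an integer and θ ∈ (0, 1], and suppose that for every k ∈ ℕ every entry of the product Φ_B(k) = A(k+B−1)A(k+B−2)···A(k) is at least θ. Then for every k and t there exists a stochastic vector φ_t(k) ∈ ℝ^n such that |[Φ_t(k)]_{ij} − [φ_t(k)]_j| ≤ 2(1 − θ)^{⌊t/B⌋} for all i, j; that is, the backward products Φ_t(k) approach a rank-one matrix 1·φ_t(k)ᵀ at a geometric rate in t. -/
import Mathlib

/-- Backward product of a sequence of matrices:
`backProd A t k = A(k+t−1)·A(k+t−2)···A(k)`, with `backProd A 0 k = I`. -/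
def backProd {n : ℕ} (A : ℕ → Matrix (Fin n) (Fin n) ℝ) : ℕ → ℕ → Matrix (Fin n) (Fin n) ℝ
  | 0, _ => 1
  | t + 1, k => A (k + t) * backProd A t k

namespace RSErg

variable {n : ℕ} {A : ℕ → Matrix (Fin n) (Fin n) ℝ}

lemma bp_nonneg (hnonneg : ∀ k i j, 0 ≤ A k i j) :
    ∀ t k i j, 0 ≤ backProd A t k i j := by
  intro t
  induction t with
  | zero =>
      intro k i j
      simp only [backProd]
      by_cases h : i = j <;> simp [Matrix.one_apply, h]
  | succ t ih =>
      intro k i j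
      simp only [backProd, Matrix.mul_apply]
      exact Finset.sum_nonneg fun l _ => mul_nonneg (hnonneg _ _ _) (ih k l j)

lemma bp_row (hrow : ∀ k i, ∑ j, A k i j = 1) :
    ∀ t k i, ∑ j, backProd A t k i j = 1 := by
  intro t
  induction t with
  | zero =>
      intro k i
      simp [backProd, Matrix.one_apply]
  | succ t ih =>
      intro k i
      simp only [backProd, Matrix.mul_apply]
      rw [Finset.sum_comm]
      have : ∀ l : Fin n, ∑ j, A (k + t) i l * backProd A t k l j = A (k + t) i l := by
        intro l
        rw [← Finset.mul_sum, ih k l, mul_one]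
      rw [Finset.sum_congr rfl fun l _ => this l, hrow]

lemma bp_le_one (hnonneg : ∀ k i j, 0 ≤ A k i j) (hrow : ∀ k i, ∑ j, A k i j = 1) :
    ∀ t k i j, backProd A t k i j ≤ 1 := by
  intro t k i j
  calc backProd A t k i j ≤ ∑ j', backProd A t k i j' :=
        Finset.single_le_sum (fun l _ => bp_nonneg hnonneg t k i l) (Finset.mem_univ j)
    _ = 1 := bp_row hrow t k i

lemma bp_add (s u k : ℕ) : backProd A (s + u) k = backProd A s (k + u) * backProd A u k := by
  induction s with
  | zero => simp [backProd]
  | succ s ih =>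
      have h1 : s + 1 + u = (s + u) + 1 := by omega
      rw [h1]
      show A (k + (s + u)) * backProd A (s + u) k = _
      rw [ih]
      have h2 : k + (s + u) = (k + u) + s := by omega
      rw [h2, ← Matrix.mul_assoc]
      rfl

lemma contract (P : Matrix (Fin n) (Fin n) ℝ) (θ : ℝ) (hθ0 : 0 ≤ θ) (hθ1 : θ ≤ 1)
    (hP : ∀ i j, θ ≤ P i j) (hProw : ∀ i, ∑ j, P i j = 1)
    (v : Fin n → ℝ) (c : ℝ) (hv : ∀ i i', |v i - v i'| ≤ c)
    (i i' : Fin n) :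
    |(∑ l, P i l * v l) - ∑ l, P i' l * v l| ≤ (1 - θ) * c := by
  have hne : (Finset.univ : Finset (Fin n)).Nonempty := ⟨i, Finset.mem_univ i⟩
  obtain ⟨lmax, -, hmax⟩ := Finset.exists_max_image Finset.univ v hne
  obtain ⟨lmin, -, hmin⟩ := Finset.exists_min_image Finset.univ v hne
  set M := v lmax
  set m := v lmin
  have hMm : m ≤ M := hmin lmax (Finset.mem_univ _)
  have hMmc : M - m ≤ c := by
    have := hv lmax lmin
    rw [abs_le] at this
    linarith [this.2]
  have upper : ∀ r : Fin n, (∑ l, P r l * v l) ≤ M - θ * (M - m) := by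
    intro r
    have key : (∑ l, P r l * (v l - M)) ≤ P r lmin * (m - M) := by
      rw [← Finset.add_sum_erase _ _ (Finset.mem_univ lmin)]
      have : (∑ l ∈ Finset.univ.erase lmin, P r l * (v l - M)) ≤ 0 :=
        Finset.sum_nonpos fun l _ => mul_nonpos_of_nonneg_of_nonpos
          (le_trans hθ0 (hP r l)) (by linarith [hmax l (Finset.mem_univ l)])
      linarith
    have hsum : (∑ l, P r l * (v l - M)) = (∑ l, P r l * v l) - M := by
      simp only [mul_sub]
      rw [Finset.sum_sub_distrib, ← Finset.sum_mul, hProw, one_mul]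
    have hθP : P r lmin * (m - M) ≤ θ * (m - M) :=
      mul_le_mul_of_nonpos_right (hP r lmin) (by linarith)
    linarith
  have lower : ∀ r : Fin n, m + θ * (M - m) ≤ (∑ l, P r l * v l) := by
    intro r
    have key : P r lmax * (M - m) ≤ (∑ l, P r l * (v l - m)) := by
      rw [← Finset.add_sum_erase _ _ (Finset.mem_univ lmax)]
      have : 0 ≤ (∑ l ∈ Finset.univ.erase lmax, P r l * (v l - m)) :=
        Finset.sum_nonneg fun l _ => mul_nonneg
          (le_trans hθ0 (hP r l)) (by linarith [hmin l (Finset.mem_univ l)])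
      linarith
    have hsum : (∑ l, P r l * (v l - m)) = (∑ l, P r l * v l) - m := by
      simp only [mul_sub]
      rw [Finset.sum_sub_distrib, ← Finset.sum_mul, hProw, one_mul]
    have hθP : θ * (M - m) ≤ P r lmax * (M - m) :=
      mul_le_mul_of_nonneg_right (hP r lmax) (by linarith)
    linarith
  have h1 := upper i
  have h2 := lower i
  have h3 := upper i'
  have h4 := lower i'
  have hc : 0 ≤ c := le_trans (abs_nonneg _) (hv i i)
  rw [abs_le]
  constructor <;> nlinarith

end RSErg

theorem row_stochastic_backProd_ergodic (n : ℕ) (hn : 0 < n)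
    (A : ℕ → Matrix (Fin n) (Fin n) ℝ)
    (hnonneg : ∀ k i j, 0 ≤ A k i j)
    (hrow : ∀ k i, ∑ j, A k i j = 1)
    (B : ℕ) (hB : 1 ≤ B) (θ : ℝ) (hθ0 : 0 < θ) (hθ1 : θ ≤ 1)
    (hpos : ∀ k i j, θ ≤ backProd A B k i j) :
    ∀ k t, ∃ φ : Fin n → ℝ, (∀ i, 0 ≤ φ i) ∧ (∑ i, φ i = 1) ∧
      ∀ i j, |backProd A t k i j - φ j| ≤ 2 * (1 - θ) ^ (t / B) := by
  have key : ∀ t k i i' j, |backProd A t k i j - backProd A t k i' j| ≤ (1 - θ) ^ (t / B) := by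
    intro t
    induction t using Nat.strong_induction_on with
    | _ t ih =>
      intro k i i' j
      by_cases ht : t < B
      · rw [Nat.div_eq_of_lt ht, pow_zero, abs_le]
        constructor <;>
          [linarith [RSErg.bp_nonneg hnonneg t k i j, RSErg.bp_le_one hnonneg hrow t k i' j];
           linarith [RSErg.bp_nonneg hnonneg t k i' j, RSErg.bp_le_one hnonneg hrow t k i j]]
      · push_neg at ht
        have hdecomp : backProd A t k = backProd A B (k + (t - B)) * backProd A (t - B) k := by
          have h := RSErg.bp_add (A := A) B (t - B) k
          have ht' : B + (t - B) = t := by omega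
          rwa [ht'] at h
        have hIH := fun i i' => ih (t - B) (by omega) k i i' j
        have hc := RSErg.contract (backProd A B (k + (t - B))) θ hθ0.le hθ1
          (fun i j => hpos _ i j) (RSErg.bp_row hrow B _)
          (fun l => backProd A (t - B) k l j) ((1 - θ) ^ ((t - B) / B)) hIH i i'
        have heq : ∀ r, backProd A t k r j = ∑ l, backProd A B (k + (t - B)) r l *
            backProd A (t - B) k l j := by
          intro r; rw [hdecomp]; rfl
        rw [heq i, heq i']
        have hdiv : t / B = (t - B) / B + 1 := by
          rw [Nat.div_eq_sub_div (by omega) ht]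
        rw [hdiv, pow_succ, mul_comm ((1-θ) ^ ((t-B)/B)) (1-θ)]
        exact hc
  intro k t
  refine ⟨fun j => backProd A t k ⟨0, hn⟩ j, fun j => RSErg.bp_nonneg hnonneg t k _ j,
    RSErg.bp_row hrow t k _, fun i j => ?_⟩
  have h1 := key t k i ⟨0, hn⟩ j
  have hpow : 0 ≤ (1 - θ) ^ (t / B) := pow_nonneg (by linarith) _
  linarith
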